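/- Under hypotheses (i), (ii), (iii), the polytope P_A has exactly n−ℓ extreme points (equivalently, P_A is combinatorially equivalent to a simplex) if and only if there exist vectors μ_1,…,μ_ℓ ∈ ℝ^n and pairwise distinct indices j_1,…,j_ℓ ∈ {1,…,n} such that ker(A) = ⋂_{i=1}^ℓ {x ∈ ℝ^n : ⟨x, μ_i⟩ = 0}, and for each i = 1,…,ℓ: ⟨e_{j_i}, μ_i⟩ < 0, ⟨e_{j_k}, μ_i⟩ = 0 for all k ≠ i, and ⟨e_j, μ_i⟩ ≥ 0 for all j ≠ j_i. -/

import Mathlib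

open Finset

private lemma sum_split {n l : ℕ} (J : Fin l → Fin n) (hJ : Function.Injective J) (f : Fin n → ℝ) :
    ∑ j, f j = (∑ i, f (J i)) + ∑ j ∈ (Finset.univ.image J)ᶜ, f j := by
  have h1 : (∑ i, f (J i)) = ∑ j ∈ Finset.univ.image J, f j :=
    (Finset.sum_image (fun x _ y _ h => hJ h)).symm
  rw [h1]
  exact (Finset.sum_add_sum_compl _ f).symm

private lemma backward {l n : ℕ} (μ : Fin l → Fin n → ℝ) (J : Fin l → Fin n)
    (hJ : Function.Injective J)
    (hsign : ∀ i, μ i (J i) < 0 ∧ (∀ k, k ≠ i → μ i (J k) = 0) ∧ (∀ j, j ≠ J i → 0 ≤ μ i j)) :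
    (Set.extremePoints ℝ ({x : Fin n → ℝ | ∀ i, ∑ j, x j * μ i j = 0}
      ∩ stdSimplex ℝ (Fin n))).ncard = n - l := by
  classical
  set V : Set (Fin n → ℝ) := {x : Fin n → ℝ | ∀ i, ∑ j, x j * μ i j = 0}
      ∩ stdSimplex ℝ (Fin n) with hV
  set d : Fin l → ℝ := fun i => -(μ i (J i)) with hd
  have hdpos : ∀ i, 0 < d i := fun i => by simp [hd]; exact (hsign i).1
  set C : Finset (Fin n) := (Finset.univ.image J)ᶜ with hC
  have hmemC : ∀ j, j ∈ C ↔ ∀ i, J i ≠ j := by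
    intro j; simp [hC]
  set s : Fin n → ℝ := fun j => 1 + ∑ i, μ i j / d i with hs
  have hs1 : ∀ j ∈ C, 1 ≤ s j := by
    intro j hj
    have : 0 ≤ ∑ i, μ i j / d i := Finset.sum_nonneg fun i _ =>
      div_nonneg ((hsign i).2.2 j (fun h => (hmemC j).1 hj i (h ▸ rfl))) (hdpos i).le
    simp only [hs]; linarith
  have hspos : ∀ j ∈ C, 0 < s j := fun j hj => lt_of_lt_of_le one_pos (hs1 j hj)
  have hVconv : Convex ℝ V := by
    apply Convex.inter _ (convex_stdSimplex ℝ _)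
    intro x hx y hy a b ha hb hab i
    have hx' := hx i
    have hy' := hy i
    have hcoord : ∀ j : Fin n, (a • x + b • y) j * μ i j
        = a * (x j * μ i j) + b * (y j * μ i j) := by
      intro j
      simp only [Pi.add_apply, Pi.smul_apply, smul_eq_mul]
      ring
    rw [Finset.sum_congr rfl fun j _ => hcoord j, Finset.sum_add_distrib,
      ← Finset.mul_sum, ← Finset.mul_sum, hx', hy']
    ring
  set w : Fin n → (Fin n → ℝ) := fun j a =>
    (s j)⁻¹ * ((if a = j then 1 else 0) + ∑ i, if a = J i then μ i j / d i else 0) with hw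
  -- coordinates of w
  have hwself : ∀ j ∈ C, w j j = (s j)⁻¹ := by
    intro j hj
    have : ∀ i, ¬ (j = J i) := fun i h => (hmemC j).1 hj i h.symm
    simp [hw, this]
  have hwC : ∀ j ∈ C, ∀ a ∈ C, a ≠ j → w j a = 0 := by
    intro j hj a ha hne
    have : ∀ i, ¬ (a = J i) := fun i h => (hmemC a).1 ha i h.symm
    simp [hw, this, hne]
  have hwJ : ∀ j ∈ C, ∀ i, w j (J i) = (s j)⁻¹ * (μ i j / d i) := by
    intro j hj i
    have h1 : ¬ ((J i : Fin n) = j) := fun h => (hmemC j).1 hj i h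
    have h2 : ∀ i', (if (J i : Fin n) = J i' then μ i' j / d i' else 0)
        = if i' = i then μ i' j / d i' else 0 := by
      intro i'
      by_cases h : i' = i
      · simp [h]
      · have : ¬ ((J i : Fin n) = J i') := fun hh => h (hJ hh).symm
        simp [h, this]
    simp only [hw, h1, if_false, zero_add]
    rw [Finset.sum_congr rfl (fun i' _ => h2 i'), Finset.sum_ite_eq' Finset.univ i
      (fun i' => μ i' j / d i')]
    simp
  have hwnonneg : ∀ j ∈ C, ∀ a, 0 ≤ w j a := by
    intro j hj a
    apply mul_nonneg (inv_nonneg.2 (hspos j hj).le)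
    apply add_nonneg (by positivity)
    apply Finset.sum_nonneg
    intro i _
    by_cases h : a = J i
    · simp only [h, if_true]
      exact div_nonneg ((hsign i).2.2 j (fun hh => (hmemC j).1 hj i (hh ▸ rfl))) (hdpos i).le
    · simp [h]
  -- w j ∈ V
  have hwV : ∀ j ∈ C, w j ∈ V := by
    intro j hj
    constructor
    · intro i'
      have expand : ∀ a, w j a * μ i' a = (s j)⁻¹ * ((if a = j then μ i' a else 0)
          + ∑ i, if a = J i then (μ i j / d i) * μ i' a else 0) := by
        intro a
        simp only [hw]
        rw [mul_assoc]
        congr 1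
        rw [add_mul, Finset.sum_mul]
        congr 1
        · by_cases h : a = j <;> simp [h]
        · refine Finset.sum_congr rfl fun i _ => ?_
          by_cases h : a = J i <;> simp [h]
      rw [Finset.sum_congr rfl fun a _ => expand a, ← Finset.mul_sum]
      rw [Finset.sum_add_distrib, Finset.sum_ite_eq' Finset.univ j (fun a => μ i' a)]
      rw [Finset.sum_comm]
      have inner : ∀ i, (∑ a, if a = J i then (μ i j / d i) * μ i' a else 0)
          = (μ i j / d i) * μ i' (J i) := by
        intro i
        rw [Finset.sum_ite_eq' Finset.univ (J i) (fun a => (μ i j / d i) * μ i' a)]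
        simp
      rw [Finset.sum_congr rfl fun i _ => inner i]
      have collapse : (∑ i, (μ i j / d i) * μ i' (J i)) = - μ i' j := by
        rw [Finset.sum_eq_single i']
        · have : μ i' (J i') = - d i' := by simp [hd]
          rw [this, mul_neg, div_mul_cancel₀ _ (ne_of_gt (hdpos i'))]
        · intro i _ hne
          rw [(hsign i').2.1 i hne, mul_zero]
        · simp
      rw [collapse]
      simp
    · constructor
      · exact hwnonneg j hj
      · have : ∀ a, w j a = (s j)⁻¹ * ((if a = j then 1 else 0)
            + ∑ i, if a = J i then μ i j / d i else 0) := fun a => rfl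
        rw [Finset.sum_congr rfl fun a _ => this a, ← Finset.mul_sum]
        rw [Finset.sum_add_distrib, Finset.sum_ite_eq' Finset.univ j (fun _ => (1:ℝ))]
        rw [Finset.sum_comm]
        have inner : ∀ i, (∑ a, if a = J i then μ i j / d i else 0) = μ i j / d i := by
          intro i
          rw [Finset.sum_ite_eq' Finset.univ (J i) (fun _ => μ i j / d i)]
          simp
        rw [Finset.sum_congr rfl fun i _ => inner i]
        simp only [Finset.mem_univ, if_true]
        have : (1:ℝ) + ∑ i, μ i j / d i = s j := rfl
        rw [this, inv_mul_cancel₀ (ne_of_gt (hspos j hj))]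
  -- key coordinate relation
  have hF2 : ∀ x ∈ V, ∀ i, x (J i) * d i = ∑ j ∈ C, x j * μ i j := by
    intro x hx i
    rw [hC]
    have h0 := hx.1 i
    rw [sum_split J hJ (fun j => x j * μ i j)] at h0
    have hJsum : (∑ k, x (J k) * μ i (J k)) = x (J i) * μ i (J i) := by
      rw [Finset.sum_eq_single i]
      · intro k _ hne
        rw [(hsign i).2.1 k hne, mul_zero]
      · simp
    rw [hJsum] at h0
    have : μ i (J i) = - d i := by simp [hd]
    rw [this] at h0
    linarith [h0]
  have hF3 : ∀ x ∈ V, ∑ j ∈ C, x j * s j = 1 := by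
    intro x hx
    have hxnn := hx.2.1
    have hsum1 : ∑ j, x j = 1 := hx.2.2
    have expand : ∀ j, x j * s j = x j + ∑ i, x j * μ i j / d i := by
      intro j
      simp only [hs, mul_add, mul_one, Finset.mul_sum]
      congr 1
      exact Finset.sum_congr rfl fun i _ => (mul_div_assoc _ _ _).symm
    rw [Finset.sum_congr rfl fun j _ => expand j, Finset.sum_add_distrib, Finset.sum_comm]
    have inner : ∀ i, (∑ j ∈ C, x j * μ i j / d i) = x (J i) := by
      intro i
      rw [← Finset.sum_div, ← hF2 x hx i, mul_div_assoc, div_self (ne_of_gt (hdpos i)), mul_one]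
    rw [Finset.sum_congr rfl fun i _ => inner i]
    have hs2 := sum_split J hJ x
    rw [hC]
    rw [hC] at *
    linarith [hsum1, hs2]
  have hF4 : ∀ x ∈ V, x = ∑ j ∈ C, (x j * s j) • w j := by
    intro x hx
    funext a
    have hsum : (∑ j ∈ C, (x j * s j) • w j) a = ∑ j ∈ C, (x j * s j) * w j a := by
      simp [Finset.sum_apply]
    rw [hsum]
    by_cases ha : a ∈ C
    · rw [Finset.sum_eq_single a]
      · rw [hwself a ha, mul_assoc, mul_inv_cancel₀ (ne_of_gt (hspos a ha)), mul_one]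
      · intro j hj hne
        rw [hwC j hj a ha (Ne.symm hne), mul_zero]
      · intro h; exact absurd ha h
    · have : ∃ i, J i = a := by
        by_contra h
        push_neg at h
        exact ha ((hmemC a).2 h)
      obtain ⟨i, rfl⟩ := this
      have : ∀ j ∈ C, (x j * s j) * w j (J i) = x j * μ i j / d i := by
        intro j hj
        rw [hwJ j hj i, ← mul_assoc, mul_assoc (x j), mul_inv_cancel₀ (ne_of_gt (hspos j hj)),
          mul_one]
        ring
      rw [Finset.sum_congr rfl this, ← Finset.sum_div, ← hF2 x hx i, mul_div_assoc,
        div_self (ne_of_gt (hdpos i)), mul_one]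
  -- each w j is extreme
  have hwE : ∀ j ∈ C, w j ∈ Set.extremePoints ℝ V := by
    intro j hj
    rw [mem_extremePoints]
    refine ⟨hwV j hj, fun x1 hx1 x2 hx2 hseg => ?_⟩
    obtain ⟨a, b, ha, hb, hab, habe⟩ := hseg
    have hzero : ∀ j' ∈ C, j' ≠ j → x1 j' = 0 ∧ x2 j' = 0 := by
      intro j' hj' hne
      have h0 : a * x1 j' + b * x2 j' = 0 := by
        have := congrFun habe j'
        simpa [hwC j hj j' hj' hne] using this
      have h1 : 0 ≤ x1 j' := hx1.2.1 j'
      have h2 : 0 ≤ x2 j' := hx2.2.1 j'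
      constructor <;> nlinarith
    have key : ∀ x ∈ V, (∀ j' ∈ C, j' ≠ j → x j' = 0) → x = w j := by
      intro x hx hxz
      have h4 := hF4 x hx
      have h3 := hF3 x hx
      rw [Finset.sum_eq_single j (fun j' hj' hne => by rw [hxz j' hj' hne, zero_mul]) 
        (fun h => absurd hj h)] at h3
      rw [Finset.sum_eq_single j (fun j' hj' hne => by rw [hxz j' hj' hne, zero_mul, zero_smul])
        (fun h => absurd hj h)] at h4
      rw [h3, one_smul] at h4
      exact h4
    exact ⟨key x1 hx1 (fun j' hj' hne => (hzero j' hj' hne).1),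
           key x2 hx2 (fun j' hj' hne => (hzero j' hj' hne).2)⟩
  -- extreme points are exactly the w j
  have hEeq : Set.extremePoints ℝ V = w '' ↑C := by
    apply Set.eq_of_subset_of_subset
    · intro x hx
      rw [mem_extremePoints] at hx
      obtain ⟨hxV, hext⟩ := hx
      set t : Fin n → ℝ := fun j => x j * s j with ht
      have ht0 : ∀ j ∈ C, 0 ≤ t j := fun j hj => mul_nonneg (hxV.2.1 j) (hspos j hj).le
      have ht1 : ∑ j ∈ C, t j = 1 := hF3 x hxV
      have htx : x = ∑ j ∈ C, t j • w j := hF4 x hxV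
      -- find j0 with t j0 ≠ 0
      have hex : ∃ j0 ∈ C, t j0 ≠ 0 := by
        by_contra h
        push_neg at h
        rw [Finset.sum_eq_zero h] at ht1
        norm_num at ht1
      obtain ⟨j0, hj0, htj0⟩ := hex
      have htj0' : 0 < t j0 := lt_of_le_of_ne (ht0 j0 hj0) (Ne.symm htj0)
      have hall : ∀ j1 ∈ C, j1 ≠ j0 → t j1 = 0 := by
        by_contra h
        push_neg at h
        obtain ⟨j1, hj1, hne1, htj1⟩ := h
        have htj1' : 0 < t j1 := lt_of_le_of_ne (ht0 j1 hj1) (Ne.symm htj1)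
        have herase : ∑ j ∈ C.erase j0, t j = 1 - t j0 := by
          have := Finset.add_sum_erase C t hj0
          linarith
        have hlt1 : t j0 < 1 := by
          have hle : t j1 ≤ ∑ j ∈ C.erase j0, t j :=
            Finset.single_le_sum (fun j hjj => ht0 j (Finset.mem_of_mem_erase hjj))
              (Finset.mem_erase.2 ⟨hne1, hj1⟩)
          linarith
        set y : Fin n → ℝ := (1 - t j0)⁻¹ • ∑ j ∈ C.erase j0, t j • w j with hy
        have hyV : y ∈ V := by
          have : y = ∑ j ∈ C.erase j0, ((1 - t j0)⁻¹ * t j) • w j := by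
            rw [hy, Finset.smul_sum]
            exact Finset.sum_congr rfl fun j _ => smul_smul _ _ _
          rw [this]
          apply Convex.sum_mem hVconv
          · intro j hjj
            exact mul_nonneg (inv_nonneg.2 (by linarith)) (ht0 j (Finset.mem_of_mem_erase hjj))
          · rw [← Finset.mul_sum, herase, inv_mul_cancel₀ (by linarith)]
          · intro j hjj
            exact hwV j (Finset.mem_of_mem_erase hjj)
        have hseg : x ∈ openSegment ℝ (w j0) y := by
          refine ⟨t j0, 1 - t j0, htj0', by linarith, by ring, ?_⟩
          rw [hy, smul_inv_smul₀ (by linarith : (1:ℝ) - t j0 ≠ 0)]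
          rw [htx, ← Finset.add_sum_erase C (fun j => t j • w j) hj0]
        obtain ⟨hw0x, hyx⟩ := hext (w j0) (hwV j0 hj0) y hyV hseg
        have : w j0 j0 = y j0 := by rw [hw0x, hyx]
        rw [hwself j0 hj0] at this
        have hyj0 : y j0 = 0 := by
          rw [hy]
          simp only [Pi.smul_apply, smul_eq_mul]
          rw [Finset.sum_apply]
          rw [Finset.sum_eq_zero, mul_zero]
          intro j hjj
          obtain ⟨hne, hjC⟩ := Finset.mem_erase.1 hjj
          simp [hwC j hjC j0 hj0 (Ne.symm hne)]
        rw [hyj0] at this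
        exact absurd this (ne_of_gt (inv_pos.2 (hspos j0 hj0)))
      have ht1' : t j0 = 1 := by
        rw [Finset.sum_eq_single j0 (fun j hjj hne => hall j hjj hne) (fun h => absurd hj0 h)]
          at ht1
        exact ht1
      have : x = w j0 := by
        rw [htx, Finset.sum_eq_single j0 (fun j hjj hne => by rw [hall j hjj hne, zero_smul])
          (fun h => absurd hj0 h), ht1', one_smul]
      exact ⟨j0, hj0, this.symm⟩
    · rintro _ ⟨j, hj, rfl⟩
      exact hwE j hj
  rw [hEeq, Set.ncard_image_of_injOn, Set.ncard_coe_finset]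
  · rw [hC, Finset.card_compl, Finset.card_image_of_injective _ hJ]
    simp
  · intro a ha b hb hab
    by_contra hne
    have h1 : w a a = (s a)⁻¹ := hwself a ha
    have h2 : w b a = 0 := hwC b hb a ha hne
    rw [hab, h2] at h1
    exact absurd h1.symm (ne_of_gt (inv_pos.2 (hspos a ha)))

-- Forward direction


private lemma sum_split' {n l : ℕ} (J : Fin l → Fin n) (hJ : Function.Injective J) (f : Fin n → ℝ) :
    ∑ j, f j = (∑ i, f (J i)) + ∑ j ∈ (Finset.univ.image J)ᶜ, f j := by
  have h1 : (∑ i, f (J i)) = ∑ j ∈ Finset.univ.image J, f j :=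
    (Finset.sum_image (fun x _ y _ h => hJ h)).symm
  rw [h1]
  exact (Finset.sum_add_sum_compl _ f).symm

set_option maxHeartbeats 2000000 in
private lemma forward {l n : ℕ} (hl : 1 ≤ l) (hn : l ≤ n) (A : Matrix (Fin l) (Fin n) ℤ)
    (hi : ∃ x ∈ ({x : Fin n → ℝ | ∀ i, ∑ j, (A i j : ℝ) * x j = 0} ∩ stdSimplex ℝ (Fin n)),
        ∀ j, 0 < x j)
    (hii : (A.map (Int.cast : ℤ → ℝ)).rank = l)
    (hmain : (Set.extremePoints ℝ
        ({x : Fin n → ℝ | ∀ i, ∑ j, (A i j : ℝ) * x j = 0} ∩ stdSimplex ℝ (Fin n))).ncard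
      = n - l) :
    ∃ (μ : Fin l → (Fin n → ℝ)) (J : Fin l → Fin n), Function.Injective J ∧
      ({x : Fin n → ℝ | ∀ i, ∑ j, (A i j : ℝ) * x j = 0}
        = {x : Fin n → ℝ | ∀ i, ∑ j, x j * μ i j = 0}) ∧
      ∀ i, μ i (J i) < 0 ∧ (∀ k, k ≠ i → μ i (J k) = 0) ∧ (∀ j, j ≠ J i → 0 ≤ μ i j) := by
  classical
  have hn0 : 0 < n := by clear hmain; omega
  haveI : NeZero n := ⟨hn0.ne'⟩
  set Amap : Matrix (Fin l) (Fin n) ℝ := A.map (Int.cast : ℤ → ℝ) with hAmap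
  set Kmod : Submodule ℝ (Fin n → ℝ) := LinearMap.ker Amap.mulVecLin with hKmod
  have hKset : {x : Fin n → ℝ | ∀ i, ∑ j, (A i j : ℝ) * x j = 0} = ↑Kmod := by
    ext x
    simp only [Set.mem_setOf_eq, SetLike.mem_coe, hKmod, LinearMap.mem_ker,
      Matrix.mulVecLin_apply, funext_iff]
    constructor
    · intro h i
      simpa [Matrix.mulVec, dotProduct, hAmap, Matrix.map_apply] using h i
    · intro h i
      simpa [Matrix.mulVec, dotProduct, hAmap, Matrix.map_apply] using h i
  have hfinK : Module.finrank ℝ Kmod = n - l := by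
    have h := LinearMap.finrank_range_add_finrank_ker Amap.mulVecLin
    have hr : Module.finrank ℝ (LinearMap.range Amap.mulVecLin) = l := hii
    rw [hr, Module.finrank_pi, Fintype.card_fin, ← hKmod] at h
    clear hmain
    omega
  set V : Set (Fin n → ℝ) := ↑Kmod ∩ stdSimplex ℝ (Fin n) with hV
  rw [hKset] at hmain hi
  obtain ⟨p, hpV, hppos⟩ := hi
  have hpK : p ∈ Kmod := hpV.1
  have hVconv : Convex ℝ V := (Submodule.convex Kmod).inter (convex_stdSimplex ℝ _)
  have hVcomp : IsCompact V :=
    IsCompact.inter_left (isCompact_stdSimplex ℝ (Fin n)) (Submodule.closed_of_finiteDimensional Kmod)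
  -- l < n
  have hlt : l < n := by
    by_contra hge
    have hnl : n - l = 0 := by omega
    have hKbot : Kmod = ⊥ := Submodule.finrank_eq_zero.mp (by rw [hfinK, hnl])
    have : p = 0 := by
      have := hpK
      rw [hKbot, Submodule.mem_bot] at this
      exact this
    have h0 := hppos ⟨0, hn0⟩
    rw [this] at h0
    exact lt_irrefl 0 h0
  -- extreme points
  set E : Set (Fin n → ℝ) := Set.extremePoints ℝ V with hE
  have hEfin : E.Finite := by
    by_contra h
    have h0 : E.ncard = 0 := Set.Infinite.ncard h
    rw [hmain] at h0
    omega
  have hVhull : convexHull ℝ E = V := by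
    have h1 := closure_convexHull_extremePoints hVcomp hVconv
    have h2 : IsClosed (convexHull ℝ E) := (hEfin.isCompact_convexHull (𝕜 := ℝ)).isClosed
    rw [h2.closure_eq] at h1
    exact h1
  set F : Finset (Fin n → ℝ) := hEfin.toFinset with hF
  have hFcard : F.card = n - l := by
    rw [← Set.ncard_eq_toFinset_card E hEfin]
    exact hmain
  set eqv : Fin (n - l) ≃ {x // x ∈ F} := (finCongr hFcard.symm).trans F.equivFin.symm
    with heqv
  set v : Fin (n - l) → (Fin n → ℝ) := fun k => (eqv k : Fin n → ℝ) with hv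
  have hvinj : Function.Injective v :=
    Subtype.coe_injective.comp eqv.injective
  have hvE : ∀ k, v k ∈ E := by
    intro k
    have h2 := (eqv k).2
    exact (Set.Finite.mem_toFinset hEfin).1 h2
  have hvrange : Set.range v = E := by
    apply Set.eq_of_subset_of_subset
    · rintro _ ⟨k, rfl⟩; exact hvE k
    · intro y hy
      refine ⟨eqv.symm ⟨y, (Set.Finite.mem_toFinset hEfin).2 hy⟩, ?_⟩
      simp only [hv, Equiv.apply_symm_apply]
  have hvV : ∀ k, v k ∈ V := fun k => extremePoints_subset (hvE k)
  -- span facts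
  have hspanV : Submodule.span ℝ V = Kmod := by
    apply le_antisymm
    · exact Submodule.span_le.2 Set.inter_subset_left
    · intro z hz
      have hzero_case : ∀ z, z ∈ Kmod → (∑ j, z j) = 0 → z ∈ Submodule.span ℝ V := by
        intro z hzK hzsum
        set pmin : ℝ := Finset.univ.inf' Finset.univ_nonempty p with hpmin_def
        have hpminpos : 0 < pmin := by
          obtain ⟨j0, _, hj0⟩ := Finset.exists_mem_eq_inf' (Finset.univ_nonempty) p
          rw [hpmin_def, hj0]
          exact hppos j0
        set ε : ℝ := pmin / (‖z‖ + 1) with hεdef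
        have hnorm : (0:ℝ) ≤ ‖z‖ := norm_nonneg z
        have hεpos : 0 < ε := div_pos hpminpos (by linarith)
        have hεz : ε * (‖z‖ + 1) = pmin := div_mul_cancel₀ pmin (by linarith)
        have hbound : ∀ j, |z j| ≤ ‖z‖ := fun j => by
          simpa [Real.norm_eq_abs] using norm_le_pi_norm z j
        set y : Fin n → ℝ := p + ε • z with hy
        have hyK : y ∈ Kmod := Kmod.add_mem hpK (Kmod.smul_mem ε hzK)
        have hyV : y ∈ V := by
          refine ⟨hyK, fun j => ?_, ?_⟩
          · have h1 : pmin ≤ p j := Finset.inf'_le p (Finset.mem_univ j)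
            have h2 : -‖z‖ ≤ z j := (abs_le.1 (hbound j)).1
            have h3 : ε * (-‖z‖) ≤ ε * z j :=
              mul_le_mul_of_nonneg_left h2 hεpos.le
            have : y j = p j + ε * z j := by simp [hy]
            rw [this]
            nlinarith
          · have : ∀ j, y j = p j + ε * z j := fun j => by simp [hy]
            rw [Finset.sum_congr rfl fun j _ => this j, Finset.sum_add_distrib,
              ← Finset.mul_sum, hzsum, mul_zero, add_zero]
            exact hpV.2.2
        have hzy : z = ε⁻¹ • (y - p) := by
          funext j
          have hyj : y j - p j = ε * z j := by simp [hy]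
          simp only [Pi.smul_apply, Pi.sub_apply, smul_eq_mul, hyj]
          rw [← mul_assoc, inv_mul_cancel₀ (ne_of_gt hεpos), one_mul]
        rw [hzy]
        exact Submodule.smul_mem _ _ (Submodule.sub_mem _ (Submodule.subset_span hyV)
          (Submodule.subset_span hpV))
      set sz : ℝ := ∑ j, z j with hsz
      have hz' : z - sz • p ∈ Kmod := Kmod.sub_mem hz (Kmod.smul_mem sz hpK)
      have hz'sum : (∑ j, (z - sz • p) j) = 0 := by
        have : ∀ j, (z - sz • p) j = z j - sz * p j := fun j => by
          simp [Pi.sub_apply, Pi.smul_apply, smul_eq_mul]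
        rw [Finset.sum_congr rfl fun j _ => this j, Finset.sum_sub_distrib, ← Finset.mul_sum,
          hpV.2.2, mul_one, hsz]
        ring
      have h1 := hzero_case _ hz' hz'sum
      have h2 : z = (z - sz • p) + sz • p := by abel
      rw [h2]
      exact Submodule.add_mem _ h1 (Submodule.smul_mem _ sz (Submodule.subset_span hpV))
  have hspanE : Submodule.span ℝ (Set.range v) = Kmod := by
    rw [hvrange]
    apply le_antisymm
    · rw [← hspanV]
      exact Submodule.span_mono extremePoints_subset
    · rw [← hspanV]
      apply Submodule.span_le.2
      rw [← hVhull]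
      exact convexHull_min Submodule.subset_span (Submodule.convex _)
  have hLI : LinearIndependent ℝ v := by
    rw [linearIndependent_iff_card_eq_finrank_span]
    rw [Fintype.card_fin]
    show n - l = Module.finrank ℝ (Submodule.span ℝ (Set.range v))
    rw [hspanE, hfinK]
  have huniq : ∀ t c : Fin (n - l) → ℝ, (∑ k, t k • v k) = (∑ k, c k • v k) → t = c := by
    intro t c h
    funext k
    have h0 : (∑ k, (t - c) k • v k) = 0 := by
      have : ∀ k, (t - c) k • v k = t k • v k - c k • v k := fun k => by
        simp [Pi.sub_apply, sub_smul]
      rw [Finset.sum_congr rfl fun k _ => this k, Finset.sum_sub_distrib, h, sub_self]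
    have := Fintype.linearIndependent_iff.1 hLI (t - c) h0 k
    simpa [sub_eq_zero] using this
  have hrep : ∀ x ∈ V, ∃ t : Fin (n - l) → ℝ,
      (∀ k, 0 ≤ t k) ∧ (∑ k, t k) = 1 ∧ (∑ k, t k • v k) = x := by
    intro x hx
    have hx' : x ∈ convexHull ℝ (Set.range v) := by
      rw [hvrange, hVhull]; exact hx
    rw [convexHull_range_eq_exists_affineCombination] at hx'
    obtain ⟨sF, wt, h0, h1, h2⟩ := hx'
    refine ⟨fun k => if k ∈ sF then wt k else 0, fun k => ?_, ?_, ?_⟩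
    · by_cases h : k ∈ sF
      · simp only [h, if_true]; exact h0 k h
      · simp [h]
    · rw [Finset.sum_ite_mem, Finset.univ_inter]
      exact h1
    · have : ∀ k, (if k ∈ sF then wt k else 0) • v k = if k ∈ sF then wt k • v k else 0 :=
        fun k => by split <;> simp
      rw [Finset.sum_congr rfl fun k _ => this k, Finset.sum_ite_mem, Finset.univ_inter]
      rw [← affineCombination_eq_linear_combination sF v wt h1]
      exact h2
  -- Claim A: each vertex has a private coordinate
  have hsig : ∀ k, ∃ j, 0 < v k j ∧ ∀ k', k' ≠ k → v k' j = 0 := by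
    intro k
    have hvnn : ∀ k' j, 0 ≤ v k' j := fun k' j => (hvV k').2.1 j
    have hvsum : ∀ k', (∑ j, v k' j) = 1 := fun k' => (hvV k').2.2
    by_contra hcon
    push_neg at hcon
    -- hcon : ∀ j, 0 < v k j → ∃ k', k' ≠ k ∧ v k' j ≠ 0
    have hex : ∃ j, 0 < v k j := by
      by_contra hT
      push_neg at hT
      have : (∑ j, v k j) = 0 :=
        Finset.sum_eq_zero fun j _ => le_antisymm (hT j) (hvnn k j)
      rw [hvsum k] at this
      norm_num at this
    by_cases hm1 : n - l = 1
    · obtain ⟨j, hj⟩ := hex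
      obtain ⟨k', hk'⟩ := hcon j hj
      apply hk'.1
      have h1 : (k' : ℕ) < n - l := k'.2
      have h2 : (k : ℕ) < n - l := k.2
      apply Fin.ext
      omega
    · have hm2 : 2 ≤ n - l := by omega
      set c : ℝ := ((n - l : ℕ) - 1 : ℝ)⁻¹ with hc
      have hcden : (1:ℝ) ≤ ((n - l : ℕ) : ℝ) - 1 := by
        have : (2:ℝ) ≤ ((n - l : ℕ) : ℝ) := by exact_mod_cast hm2
        linarith
      have hcpos : 0 < c := inv_pos.2 (by linarith)
      set y : Fin n → ℝ := ∑ k' ∈ Finset.univ.erase k, c • v k' with hy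
      have hcardE : ((Finset.univ.erase k).card : ℝ) = ((n - l : ℕ) : ℝ) - 1 := by
        rw [Finset.card_erase_of_mem (Finset.mem_univ k), Finset.card_univ, Fintype.card_fin]
        have h1 : 1 ≤ n - l := by omega
        push_cast [Nat.cast_sub h1]
        ring
      have hyV : y ∈ V := by
        rw [hy]
        apply Convex.sum_mem hVconv (fun k' _ => hcpos.le)
        · rw [Finset.sum_const, nsmul_eq_mul, hcardE, hc]
          exact mul_inv_cancel₀ (by linarith)
        · exact fun k' _ => hvV k'
      have hypos : ∀ j, 0 < v k j → 0 < y j := by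
        intro j hj
        obtain ⟨k', hk'ne, hk'z⟩ := hcon j hj
        have hk'pos : 0 < v k' j := lt_of_le_of_ne (hvnn k' j) (Ne.symm hk'z)
        have hyj : y j = ∑ k'' ∈ Finset.univ.erase k, c * v k'' j := by
          rw [hy]
          rw [Finset.sum_apply]
          exact Finset.sum_congr rfl fun k'' _ => rfl
        rw [hyj]
        have hle : c * v k' j ≤ ∑ k'' ∈ Finset.univ.erase k, c * v k'' j :=
          Finset.single_le_sum (fun k'' _ => mul_nonneg hcpos.le (hvnn k'' j))
            (Finset.mem_erase.2 ⟨hk'ne, Finset.mem_univ k'⟩)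
        have : 0 < c * v k' j := mul_pos hcpos hk'pos
        linarith
      set T : Finset (Fin n) := Finset.univ.filter (fun j => 0 < v k j)  with hT
      have hTne : T.Nonempty := by
        obtain ⟨j, hj⟩ := hex
        exact ⟨j, Finset.mem_filter.2 ⟨Finset.mem_univ j, hj⟩⟩
      set ε : ℝ := T.inf' hTne (fun j => y j / (v k j + 1)) with hε
      have hεpos : 0 < ε := by
        rw [hε]
        rw [Finset.lt_inf'_iff]
        intro j hj
        have hj' : 0 < v k j := (Finset.mem_filter.1 hj).2
        exact div_pos (hypos j hj') (by linarith [hvnn k j])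
      set z : Fin n → ℝ := y + ε • (y - v k) with hz
      have hzj : ∀ j, z j = y j + ε * (y j - v k j) := fun j => by
        simp [hz, Pi.add_apply, Pi.smul_apply, Pi.sub_apply, smul_eq_mul]
      have hzV : z ∈ V := by
        refine ⟨?_, fun j => ?_, ?_⟩
        · rw [hz]
          exact Kmod.add_mem hyV.1 (Kmod.smul_mem ε (Kmod.sub_mem hyV.1 (hvV k).1))
        · rw [hzj j]
          by_cases hvj : 0 < v k j
          · have hjT : j ∈ T := Finset.mem_filter.2 ⟨Finset.mem_univ j, hvj⟩
            have hle : ε ≤ y j / (v k j + 1) := by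
              rw [hε]
              exact Finset.inf'_le _ hjT
            rw [le_div_iff₀ (by linarith)] at hle
            have hεy : 0 ≤ ε * y j := mul_nonneg hεpos.le (hypos j hvj).le
            nlinarith
          · have hvj0 : v k j = 0 := le_antisymm (not_lt.1 hvj) (hvnn k j)
            rw [hvj0]
            have hyj : 0 ≤ y j := by
              rw [hy, Finset.sum_apply]
              exact Finset.sum_nonneg fun k'' _ => by
                simp only [Pi.smul_apply, smul_eq_mul]
                exact mul_nonneg hcpos.le (hvnn k'' j)
            nlinarith
        · have : ∀ j, z j = y j + ε * (y j - v k j) := hzj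
          rw [Finset.sum_congr rfl fun j _ => this j, Finset.sum_add_distrib, ← Finset.mul_sum,
            Finset.sum_sub_distrib, hyV.2.2, hvsum k]
          ring
      obtain ⟨t, ht0, ht1, htv⟩ := hrep z hzV
      set c' : Fin (n - l) → ℝ := fun k'' => if k'' = k then -ε else (1 + ε) * c with hc'
      have hc'v : (∑ k'', c' k'' • v k'') = z := by
        rw [← Finset.add_sum_erase _ _ (Finset.mem_univ k)]
        have h1 : c' k = -ε := by simp [hc']
        have h2 : ∀ k'' ∈ Finset.univ.erase k, c' k'' • v k'' = (1 + ε) • (c • v k'') := by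
          intro k'' hk''
          have : k'' ≠ k := (Finset.mem_erase.1 hk'').1
          rw [hc']
          simp only [this, if_false]
          rw [smul_smul]
        rw [h1, Finset.sum_congr rfl h2, ← Finset.smul_sum, ← hy, hz]
        funext j
        simp only [Pi.add_apply, Pi.smul_apply, Pi.sub_apply, smul_eq_mul, neg_mul]
        ring
      have := huniq t c' (by rw [htv, hc'v])
      have htk : t k = -ε := by rw [this, hc']; simp
      have := ht0 k
      rw [htk] at this
      linarith
  choose σ hσpos hσzero using hsig
  have hσinj : Function.Injective σ := by
    intro a b hab
    by_contra hne
    have h1 := hσzero a b (fun h => hne h.symm)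
    have h2 := hσpos b
    rw [← hab] at h2
    rw [h1] at h2
    exact lt_irrefl 0 h2
  -- complement of range σ
  set Cσ : Finset (Fin n) := (Finset.univ.image σ)ᶜ with hCσdef
  have hCσcard : Cσ.card = l := by
    rw [hCσdef, Finset.card_compl, Finset.card_image_of_injective _ hσinj, Finset.card_univ,
      Fintype.card_fin, Fintype.card_fin]
    omega
  set eqJ : Fin l ≃ {x // x ∈ Cσ} := (finCongr hCσcard.symm).trans Cσ.equivFin.symm with heqJ
  set J : Fin l → Fin n := fun i => (eqJ i : Fin n) with hJ
  have hJinj : Function.Injective J := Subtype.coe_injective.comp eqJ.injective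
  have hJmem : ∀ i, J i ∈ Cσ := fun i => (eqJ i).2
  have hJσ : ∀ i k, σ k ≠ J i := by
    intro i k h
    have := hJmem i
    rw [hCσdef, Finset.mem_compl] at this
    exact this (Finset.mem_image.2 ⟨k, Finset.mem_univ k, h⟩)
  set μ : Fin l → (Fin n → ℝ) := fun i jj =>
    (if jj = J i then (-1:ℝ) else 0) +
      ∑ k, (if σ k = jj then v k (J i) / v k (σ k) else 0) with hμ
  have hμa : ∀ i, μ i (J i) = -1 := by
    intro i
    show (if J i = J i then (-1:ℝ) else 0)
      + (∑ k, if σ k = J i then v k (J i) / v k (σ k) else 0) = -1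
    rw [if_pos rfl, Finset.sum_eq_zero fun k _ => by simp [hJσ i k], add_zero]
  have hμb : ∀ i k, k ≠ i → μ i (J k) = 0 := by
    intro i k hki
    show (if J k = J i then (-1:ℝ) else 0)
      + (∑ k', if σ k' = J k then v k' (J i) / v k' (σ k') else 0) = 0
    have h1 : J k ≠ J i := fun h => hki (hJinj h)
    rw [if_neg h1, Finset.sum_eq_zero fun k' _ => by simp [hJσ k k'], add_zero]
  have hμc : ∀ i j, j ≠ J i → 0 ≤ μ i j := by
    intro i j hj
    show 0 ≤ (if j = J i then (-1:ℝ) else 0)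
      + (∑ k, if σ k = j then v k (J i) / v k (σ k) else 0)
    rw [if_neg hj, zero_add]
    apply Finset.sum_nonneg
    intro k _
    by_cases h : σ k = j
    · rw [if_pos h]
      exact div_nonneg ((hvV k).2.1 (J i)) ((hvV k).2.1 (σ k))
    · rw [if_neg h]
  -- the linear functionals
  set L : Fin l → ((Fin n → ℝ) →ₗ[ℝ] ℝ) := fun i => ∑ j, (μ i j) • (LinearMap.proj j) with hL
  have hLapp : ∀ i x, L i x = ∑ j, x j * μ i j := by
    intro i x
    rw [hL]
    simp only [LinearMap.coe_sum, Finset.sum_apply, LinearMap.smul_apply,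
      LinearMap.proj_apply, smul_eq_mul]
    exact Finset.sum_congr rfl fun j _ => mul_comm _ _
  have hLV : ∀ i, ∀ x ∈ V, L i x = 0 := by
    intro i x hx
    obtain ⟨t, ht0, ht1, htv⟩ := hrep x hx
    have hxcoord : ∀ a, x a = ∑ k, t k * v k a := by
      intro a
      rw [← htv, Finset.sum_apply]
      exact Finset.sum_congr rfl fun k _ => rfl
    have hxσ : ∀ k, x (σ k) = t k * v k (σ k) := by
      intro k
      rw [hxcoord (σ k), Finset.sum_eq_single k]
      · intro k' _ hne
        rw [hσzero k k' hne, mul_zero]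
      · intro h
        exact absurd (Finset.mem_univ k) h
    rw [hLapp]
    have hsplit : ∀ j, x j * μ i j = x j * (if j = J i then (-1:ℝ) else 0)
        + ∑ k, x j * (if σ k = j then v k (J i) / v k (σ k) else 0) := by
      intro j
      rw [hμ]
      simp only
      rw [mul_add, Finset.mul_sum]
    rw [Finset.sum_congr rfl fun j _ => hsplit j, Finset.sum_add_distrib]
    have hfirst : (∑ j, x j * (if j = J i then (-1:ℝ) else 0)) = - x (J i) := by
      rw [Finset.sum_eq_single (J i)]
      · simp
      · intro j _ hne
        rw [if_neg hne, mul_zero]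
      · intro h
        exact absurd (Finset.mem_univ (J i)) h
    have hsecond : (∑ j, ∑ k, x j * (if σ k = j then v k (J i) / v k (σ k) else 0))
        = ∑ k, t k * v k (J i) := by
      rw [Finset.sum_comm]
      apply Finset.sum_congr rfl
      intro k _
      rw [Finset.sum_eq_single (σ k)]
      · rw [if_pos rfl, hxσ k, mul_assoc, mul_comm (v k (σ k)),
          div_mul_cancel₀ _ (ne_of_gt (hσpos k))]
      · intro j _ hne
        rw [if_neg (fun h => hne h.symm), mul_zero]
      · intro h
        exact absurd (Finset.mem_univ (σ k)) h
    rw [hfirst, hsecond]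
    have hxJ : x (J i) = ∑ k, t k * v k (J i) := hxcoord (J i)
    rw [← hxJ]
    ring
  have hKL : ∀ i, Kmod ≤ LinearMap.ker (L i) := by
    intro i
    rw [← hspanV]
    apply Submodule.span_le.2
    intro x hx
    rw [SetLike.mem_coe, LinearMap.mem_ker]
    exact hLV i x hx
  set Φ : (Fin n → ℝ) →ₗ[ℝ] (Fin l → ℝ) := LinearMap.pi L with hΦ
  have hKΦ : Kmod ≤ LinearMap.ker Φ := by
    intro x hx
    rw [LinearMap.mem_ker]
    funext i
    rw [hΦ]
    simp only [LinearMap.pi_apply, Pi.zero_apply]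
    exact LinearMap.mem_ker.1 (hKL i hx)
  have hΦsurj : Function.Surjective Φ := by
    intro u
    refine ⟨∑ i', (-u i') • (Pi.single (J i') (1:ℝ) : Fin n → ℝ), ?_⟩
    funext i
    rw [hΦ]
    simp only [LinearMap.pi_apply]
    rw [map_sum]
    have hterm : ∀ i', L i ((-u i') • (Pi.single (J i') (1:ℝ) : Fin n → ℝ))
        = (-u i') * μ i (J i') := by
      intro i'
      rw [map_smul, smul_eq_mul]
      congr 1
      rw [hLapp]
      rw [Finset.sum_eq_single (J i')]
      · rw [Pi.single_apply, if_pos rfl, one_mul]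
      · intro j _ hne
        rw [Pi.single_apply, if_neg hne, zero_mul]
      · intro h
        exact absurd (Finset.mem_univ (J i')) h
    rw [Finset.sum_congr rfl fun i' _ => hterm i']
    rw [Finset.sum_eq_single i]
    · rw [hμa i]
      ring
    · intro i' _ hne
      rw [hμb i i' hne, mul_zero]
    · intro h
      exact absurd (Finset.mem_univ i) h
  have hkerΦ : Module.finrank ℝ (LinearMap.ker Φ) = n - l := by
    have h := LinearMap.finrank_range_add_finrank_ker Φ
    rw [LinearMap.range_eq_top.2 hΦsurj, finrank_top, Module.finrank_pi, Module.finrank_pi,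
      Fintype.card_fin, Fintype.card_fin] at h
    clear hmain
    omega
  have hKeq : Kmod = LinearMap.ker Φ :=
    Submodule.eq_of_le_of_finrank_le hKΦ (le_of_eq (by rw [hkerΦ, hfinK]))
  have hmem : ∀ x : Fin n → ℝ, x ∈ LinearMap.ker Φ ↔ ∀ i, (∑ j, x j * μ i j) = 0 := by
    intro x
    rw [LinearMap.mem_ker, funext_iff]
    apply forall_congr'
    intro i
    rw [hΦ]
    simp only [LinearMap.pi_apply, Pi.zero_apply]
    rw [hLapp]
  refine ⟨μ, J, hJinj, ?_, fun i => ⟨by rw [hμa i]; norm_num, hμb i, hμc i⟩⟩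
  rw [hKset]
  ext x
  show x ∈ Kmod ↔ x ∈ {x : Fin n → ℝ | ∀ i, (∑ j, x j * μ i j) = 0}
  rw [hKeq]
  exact hmem x


/-- Under hypotheses (i), (ii), (iii), the polytope `P_A` has exactly `n - ℓ`
extreme points iff there are vectors `μ i` and pairwise distinct indices `J i` such that
`ker A = ⋂ i, (μ i)ᗮ` with the stated sign conditions. -/
theorem stmt_0 (ℓ n : ℕ) (hℓ : 1 ≤ ℓ) (hn : ℓ ≤ n)
    (A : Matrix (Fin ℓ) (Fin n) ℤ)
    (hi : ∃ x ∈ ({x : Fin n → ℝ | ∀ i, ∑ j, (A i j : ℝ) * x j = 0} ∩ stdSimplex ℝ (Fin n)),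
        ∀ j, 0 < x j)
    (hii : (A.map (Int.cast : ℤ → ℝ)).rank = ℓ)
    (hiii : ∀ j, ∃ i, A i j ≠ 0) :
    (Set.extremePoints ℝ
        ({x : Fin n → ℝ | ∀ i, ∑ j, (A i j : ℝ) * x j = 0} ∩ stdSimplex ℝ (Fin n))).ncard
      = n - ℓ ↔
    ∃ (μ : Fin ℓ → (Fin n → ℝ)) (J : Fin ℓ → Fin n), Function.Injective J ∧
      ({x : Fin n → ℝ | ∀ i, ∑ j, (A i j : ℝ) * x j = 0}
        = {x : Fin n → ℝ | ∀ i, ∑ j, x j * μ i j = 0}) ∧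
      ∀ i, μ i (J i) < 0 ∧ (∀ k, k ≠ i → μ i (J k) = 0) ∧ (∀ j, j ≠ J i → 0 ≤ μ i j) := by
  constructor
  · intro h
    exact forward hℓ hn A hi hii h
  · rintro ⟨μ, J, hJ, hKeq, hsign⟩
    rw [hKeq]
    exact backward μ J hJ hsign
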